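/- Let H be a complex Hilbert space, 𝒱 a closed subspace, and (V,v) = ((V_i, v_i))_{i∈I} a fusion Bessel sequence with every V_i ⊆ 𝒱 and synthesis operator T_V. Let A : 𝒱 → 𝒱 be a bounded bijective operator (with bounded inverse A⁻¹), let ṽ = (ṽ_i)_{i∈I} be weights, and let δ > 0 satisfy δ ≤ v_i/ṽ_i for all i ∈ I. Then each A(V_i) is a closed subspace of 𝒱 and (A(V_i), ṽ_i)_{i∈I} is a fusion Bessel sequence for 𝒱 with upper Bessel bound ‖A ∘ T_V‖² ‖A⁻¹‖² / δ²; that is, Σ_{i∈I} ṽ_i² ‖π_{A(V_i)} f‖² ≤ (‖A ∘ T_V‖² ‖A⁻¹‖² / δ²) ‖f‖² for all f ∈ H. -/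

import Mathlib

open scoped ENNReal
set_option synthInstance.maxHeartbeats 1000000
set_option maxHeartbeats 1000000
noncomputable section

lemma aux_norm_sq_sum_single {I : Type*} [DecidableEq I] {G : I → Type*}
    [∀ i, NormedAddCommGroup (G i)] [∀ i, InnerProductSpace ℂ (G i)]
    (F : Finset I) (x : ∀ i, G i) :
    ‖∑ i ∈ F, lp.single 2 i (x i)‖ ^ 2 = ∑ i ∈ F, ‖x i‖ ^ 2 := by
  have h1 : (inner ℂ (∑ i ∈ F, lp.single 2 i (x i)) (∑ i ∈ F, lp.single 2 i (x i)) : ℂ)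
      = ∑ i ∈ F, inner ℂ (x i) (x i) := by
    rw [sum_inner]
    refine Finset.sum_congr rfl fun i hi => ?_
    rw [lp.inner_single_left]
    congr 1
    rw [lp.coeFn_sum, Finset.sum_apply]
    rw [Finset.sum_eq_single_of_mem i hi]
    · exact lp.single_apply_self 2 i (x i)
    · intro j _ hj
      exact lp.single_apply_ne 2 j (x j) (Ne.symm hj)
  rw [← @inner_self_eq_norm_sq ℂ, h1, map_sum]
  exact Finset.sum_congr rfl fun i _ => @inner_self_eq_norm_sq ℂ _ _ _ _ (x i)

/-- If `(V,v)` is a fusion Bessel sequence inside `𝒱`, `A : 𝒱 → 𝒱` is a bounded bijective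
operator with bounded inverse, and `δ ≤ v i / ṽ i` for all `i`, then `(A(V_i), ṽ_i)` is a
fusion Bessel sequence for `𝒱` with upper Bessel bound `‖A ∘ T_V‖² ‖A⁻¹‖² / δ²`. -/
theorem fusionBessel_map_invertible
    {H : Type*} [NormedAddCommGroup H] [InnerProductSpace ℂ H] [CompleteSpace H]
    {I : Type*} [Countable I]
    (𝒱 : Submodule ℂ H) [CompleteSpace 𝒱]
    (V : I → Submodule ℂ H) [∀ i, CompleteSpace (V i)] (hV : ∀ i, V i ≤ 𝒱)
    (v : I → ℝ) (hv : ∀ i, 0 < v i)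
    (TV : lp (fun i => V i) 2 →L[ℂ] H)
    (hTV : ∀ g : lp (fun i => V i) 2, HasSum (fun i => (v i : ℂ) • (g i : H)) (TV g))
    -- the corestriction of `TV` to `𝒱` (well defined since every `V i ≤ 𝒱`)
    (TV' : lp (fun i => V i) 2 →L[ℂ] 𝒱) (hTV' : ∀ g, (TV' g : H) = TV g)
    -- `A` is a bounded bijective operator on `𝒱` with bounded inverse
    (A : 𝒱 ≃L[ℂ] 𝒱)
    (vt : I → ℝ) (hvt : ∀ i, 0 < vt i)
    (δ : ℝ) (hδ : 0 < δ) (hδle : ∀ i, δ ≤ v i / vt i) :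
    ∃ hcl : ∀ i, IsClosed
        ((Submodule.map ((𝒱.subtypeL ∘L (A : 𝒱 →L[ℂ] 𝒱) : 𝒱 →L[ℂ] H) : 𝒱 →ₗ[ℂ] H) (Submodule.comap (𝒱.subtypeL : 𝒱 →ₗ[ℂ] H) (V i))
          : Submodule ℂ H) : Set H),
      (∀ i, Submodule.map ((𝒱.subtypeL ∘L (A : 𝒱 →L[ℂ] 𝒱) : 𝒱 →L[ℂ] H) : 𝒱 →ₗ[ℂ] H) (Submodule.comap (𝒱.subtypeL : 𝒱 →ₗ[ℂ] H) (V i))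
          ≤ 𝒱) ∧
      ∀ f : H,
        haveI : ∀ i, CompleteSpace
            (Submodule.map ((𝒱.subtypeL ∘L (A : 𝒱 →L[ℂ] 𝒱) : 𝒱 →L[ℂ] H) : 𝒱 →ₗ[ℂ] H) (Submodule.comap (𝒱.subtypeL : 𝒱 →ₗ[ℂ] H) (V i))
              : Submodule ℂ H) := fun i => (hcl i).completeSpace_coe
        (Summable fun i => (vt i) ^ 2 *
            ‖(Submodule.orthogonalProjectionOnto
              (Submodule.map ((𝒱.subtypeL ∘L (A : 𝒱 →L[ℂ] 𝒱) : 𝒱 →L[ℂ] H) : 𝒱 →ₗ[ℂ] H) (Submodule.comap (𝒱.subtypeL : 𝒱 →ₗ[ℂ] H) (V i)))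
              f : H)‖ ^ 2) ∧
        ∑' i, (vt i) ^ 2 *
            ‖(Submodule.orthogonalProjectionOnto
              (Submodule.map ((𝒱.subtypeL ∘L (A : 𝒱 →L[ℂ] 𝒱) : 𝒱 →L[ℂ] H) : 𝒱 →ₗ[ℂ] H) (Submodule.comap (𝒱.subtypeL : 𝒱 →ₗ[ℂ] H) (V i)))
              f : H)‖ ^ 2 ≤
          (‖(A : 𝒱 →L[ℂ] 𝒱) ∘L TV'‖ ^ 2 * ‖(A.symm : 𝒱 →L[ℂ] 𝒱)‖ ^ 2 / δ ^ 2) * ‖f‖ ^ 2 := by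
  classical
  set m : 𝒱 →L[ℂ] H := 𝒱.subtypeL ∘L (A : 𝒱 →L[ℂ] 𝒱) with hm
  set W : I → Submodule ℂ H := fun i => Submodule.map (m : 𝒱 →ₗ[ℂ] H) (Submodule.comap (𝒱.subtypeL : 𝒱 →ₗ[ℂ] H) (V i))
    with hWdef
  -- `m` is a uniform embedding
  have hmemb : IsUniformEmbedding m := by
    apply ContinuousLinearMap.isUniformEmbedding_of_bound m (K := ‖(A.symm : 𝒱 →L[ℂ] 𝒱)‖₊)
    intro x
    calc ‖x‖ = ‖A.symm (A x)‖ := by simp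
      _ ≤ ‖(A.symm : 𝒱 →L[ℂ] 𝒱)‖ * ‖A x‖ := (A.symm : 𝒱 →L[ℂ] 𝒱).le_opNorm _
      _ = ↑‖(A.symm : 𝒱 →L[ℂ] 𝒱)‖₊ * ‖m x‖ := by
          rw [coe_nnnorm]
          congr 1
  have hScomp : ∀ i, IsComplete ((Submodule.comap (𝒱.subtypeL : 𝒱 →ₗ[ℂ] H) (V i) : Submodule ℂ 𝒱) : Set 𝒱) := by
    intro i
    have hVcl : IsClosed ((V i : Set H)) :=
      ((completeSpace_coe_iff_isComplete (s := (V i : Set H))).1 inferInstance).isClosed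
    have : IsClosed ((Submodule.comap (𝒱.subtypeL : 𝒱 →ₗ[ℂ] H) (V i) : Submodule ℂ 𝒱) : Set 𝒱) := by
      have : ((Submodule.comap (𝒱.subtypeL : 𝒱 →ₗ[ℂ] H) (V i) : Submodule ℂ 𝒱) : Set 𝒱)
          = Subtype.val ⁻¹' (V i : Set H) := rfl
      rw [this]
      exact hVcl.preimage continuous_subtype_val
    exact this.isComplete
  have hWc : ∀ i, IsComplete ((W i : Submodule ℂ H) : Set H) := by
    intro i
    have hset : ((W i : Submodule ℂ H) : Set H)
        = m '' ((Submodule.comap (𝒱.subtypeL : 𝒱 →ₗ[ℂ] H) (V i) : Submodule ℂ 𝒱) : Set 𝒱) :=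
      Submodule.map_coe _ _
    rw [hset]
    exact (isComplete_image_iff hmemb.isUniformInducing).2 (hScomp i)
  have hcl : ∀ i, IsClosed ((W i : Submodule ℂ H) : Set H) := fun i => (hWc i).isClosed
  haveI hCS : ∀ i, CompleteSpace (W i) := fun i => (hWc i).completeSpace_coe
  have hle : ∀ i, W i ≤ 𝒱 := by
    rintro i x ⟨y, _, rfl⟩
    exact SetLike.coe_mem (A y)
  refine ⟨hcl, hle, fun f => ?_⟩
  set g : I → H := fun i => ↑(Submodule.orthogonalProjectionOnto (W i) f) with hg
  set C : ℝ := ‖(A : 𝒱 →L[ℂ] 𝒱) ∘L TV'‖ with hC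
  set D : ℝ := ‖(A.symm : 𝒱 →L[ℂ] 𝒱)‖ ^ 2 / δ ^ 2 with hD
  have hDnn : 0 ≤ D := by positivity
  have hCnn : 0 ≤ C := by rw [hC]; exact norm_nonneg ((A : 𝒱 →L[ℂ] 𝒱) ∘L TV')
  have key : ∀ F : Finset I, ∑ i ∈ F, vt i ^ 2 * ‖g i‖ ^ 2 ≤ (C ^ 2 * D) * ‖f‖ ^ 2 := by
    intro F
    set S : ℝ := ∑ i ∈ F, vt i ^ 2 * ‖g i‖ ^ 2 with hS
    have hSnn : 0 ≤ S := Finset.sum_nonneg fun i _ => by positivity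
    choose h hmem hA using fun i => Submodule.mem_map.1 (Submodule.orthogonalProjectionOnto (W i) f).2
    have hAi : ∀ i, ((A (h i) : 𝒱) : H) = g i := fun i => hA i
    set x : ∀ i, V i := fun i =>
      (((vt i ^ 2 / v i : ℝ) : ℂ)) • (⟨(h i : H), Submodule.mem_comap.1 (hmem i)⟩ : V i) with hx
    set k : lp (fun i => V i) 2 := ∑ i ∈ F, lp.single 2 i (x i) with hk
    have hk1 : ∀ j ∈ F, k j = x j := by
      intro j hj
      rw [hk, lp.coeFn_sum, Finset.sum_apply]
      rw [Finset.sum_eq_single_of_mem j hj]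
      · exact lp.single_apply_self (E := fun i => V i) 2 j (x j)
      · intro i _ hij
        exact lp.single_apply_ne (E := fun i => V i) 2 i (x i) (Ne.symm hij)
    have hk2 : ∀ j, j ∉ F → k j = 0 := by
      intro j hj
      rw [hk, lp.coeFn_sum, Finset.sum_apply]
      refine Finset.sum_eq_zero fun i hi => ?_
      exact lp.single_apply_ne (E := fun i => V i) 2 i (x i) (fun e => hj (by rw [e]; exact hi))
    have hTVk : TV k = ∑ i ∈ F, ((vt i ^ 2 : ℝ) : ℂ) • (h i : H) := by
      have hzero : ∀ j ∉ F, (v j : ℂ) • ((k j : V j) : H) = 0 := by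
        intro j hj
        rw [hk2 j hj]
        simp
      have hsum : HasSum (fun j => (v j : ℂ) • ((k j : V j) : H))
          (∑ i ∈ F, (v i : ℂ) • ((k i : V i) : H)) :=
        hasSum_sum_of_ne_finset_zero hzero
      rw [(hTV k).unique hsum]
      refine Finset.sum_congr rfl fun i hi => ?_
      rw [hk1 i hi, hx]
      simp only [Submodule.coe_smul, smul_smul]
      congr 1
      rw [← Complex.ofReal_mul]
      congr 1
      rw [mul_comm, div_mul_cancel₀ _ (hv i).ne']
    set u : 𝒱 := ((A : 𝒱 →L[ℂ] 𝒱) ∘L TV') k with hu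
    have hTV'k : TV' k = ∑ i ∈ F, ((vt i ^ 2 : ℝ) : ℂ) • h i := by
      apply Subtype.ext
      rw [hTV' k, hTVk]
      simp
    have hucoe : (u : H) = ∑ i ∈ F, ((vt i ^ 2 : ℝ) : ℂ) • g i := by
      rw [hu]
      show ((A (TV' k) : 𝒱) : H) = _
      rw [hTV'k, map_sum]
      rw [Submodule.coe_sum]
      refine Finset.sum_congr rfl fun i hi => ?_
      rw [map_smul, Submodule.coe_smul, hAi i]
    have hip : ∀ i, (inner ℂ f (g i) : ℂ) = ((‖g i‖ ^ 2 : ℝ) : ℂ) := by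
      intro i
      have horth := (W i).starProjection_inner_eq_zero f (g i)
        (SetLike.coe_mem (Submodule.orthogonalProjectionOnto (W i) f))
      rw [inner_sub_left, sub_eq_zero] at horth
      have hproj : (W i).starProjection f = g i := rfl
      rw [hproj] at horth
      rw [horth, @inner_self_eq_norm_sq_to_K ℂ]
      norm_cast
    have hinner : (inner ℂ f (u : H) : ℂ) = ((S : ℝ) : ℂ) := by
      rw [hucoe, inner_sum]
      simp only [inner_smul_right, hip, hS]
      push_cast
      ring
    have hCS2 : S ≤ ‖f‖ * ‖u‖ := by
      have h1 : S = RCLike.re (inner ℂ f (u : H) : ℂ) := by rw [hinner]; simp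
      rw [h1]
      calc RCLike.re (inner ℂ f (u : H) : ℂ) ≤ ‖f‖ * ‖(u : H)‖ := re_inner_le_norm f (u : H)
        _ = ‖f‖ * ‖u‖ := by rw [Submodule.norm_coe]
    have hnu : ‖u‖ ≤ C * ‖k‖ := ((A : 𝒱 →L[ℂ] 𝒱) ∘L TV').le_opNorm k
    have hnk : ‖k‖ ^ 2 ≤ D * S := by
      rw [hk, aux_norm_sq_sum_single]
      rw [hS, Finset.mul_sum]
      refine Finset.sum_le_sum fun i hi => ?_
      have hxn : ‖x i‖ = (vt i ^ 2 / v i) * ‖(h i : H)‖ := by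
        rw [hx]
        simp only [norm_smul, Complex.norm_real, Real.norm_eq_abs]
        rw [abs_of_pos (div_pos (pow_pos (hvt i) 2) (hv i))]
        rfl
      have hhn : ‖(h i : H)‖ ≤ ‖(A.symm : 𝒱 →L[ℂ] 𝒱)‖ * ‖g i‖ := by
        have he : h i = A.symm (A (h i)) := by simp
        calc ‖(h i : H)‖ = ‖h i‖ := rfl
          _ = ‖A.symm (A (h i))‖ := by rw [← he]
          _ ≤ ‖(A.symm : 𝒱 →L[ℂ] 𝒱)‖ * ‖A (h i)‖ := (A.symm : 𝒱 →L[ℂ] 𝒱).le_opNorm _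
          _ = ‖(A.symm : 𝒱 →L[ℂ] 𝒱)‖ * ‖g i‖ := by
              rw [← hAi i, Submodule.norm_coe]
      have hratio : vt i ^ 2 / v i ≤ vt i / δ := by
        have h1 : δ * vt i ≤ v i := (le_div_iff₀ (hvt i)).1 (hδle i)
        rw [div_le_div_iff₀ (hv i) hδ]
        calc vt i ^ 2 * δ = (δ * vt i) * vt i := by ring
          _ ≤ v i * vt i := mul_le_mul_of_nonneg_right h1 (hvt i).le
          _ = vt i * v i := by ring
      have hxnn : 0 ≤ (vt i ^ 2 / v i) * ‖(h i : H)‖ :=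
        mul_nonneg (le_of_lt (div_pos (pow_pos (hvt i) 2) (hv i))) (norm_nonneg _)
      calc ‖x i‖ ^ 2 = ((vt i ^ 2 / v i) * ‖(h i : H)‖) ^ 2 := by rw [hxn]
        _ ≤ ((vt i / δ) * (‖(A.symm : 𝒱 →L[ℂ] 𝒱)‖ * ‖g i‖)) ^ 2 := by
            apply pow_le_pow_left₀ hxnn
            exact mul_le_mul hratio hhn (norm_nonneg _) (le_of_lt (div_pos (hvt i) hδ))
        _ = D * (vt i ^ 2 * ‖g i‖ ^ 2) := by rw [hD]; ring
    have hknn : 0 ≤ ‖k‖ := norm_nonneg _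
    have hfnn : 0 ≤ ‖f‖ := norm_nonneg _
    have hub : S ≤ ‖f‖ * (C * ‖k‖) :=
      hCS2.trans (mul_le_mul_of_nonneg_left hnu hfnn)
    have hgoalnn : 0 ≤ (C ^ 2 * D) * ‖f‖ ^ 2 :=
      mul_nonneg (mul_nonneg (pow_nonneg hCnn 2) hDnn) (sq_nonneg _)
    rcases eq_or_lt_of_le hSnn with hS0 | hSpos
    · rw [← hS0]; exact hgoalnn
    · have e1 : S * S ≤ (‖f‖ * (C * ‖k‖)) * (‖f‖ * (C * ‖k‖)) :=
        mul_self_le_mul_self hSnn hub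
      have e3 : ‖f‖ ^ 2 * C ^ 2 * ‖k‖ ^ 2 ≤ ‖f‖ ^ 2 * C ^ 2 * (D * S) :=
        mul_le_mul_of_nonneg_left hnk (by positivity)
      nlinarith [e1, e3, hSpos]
  have hBeq : C ^ 2 * ‖(A.symm : 𝒱 →L[ℂ] 𝒱)‖ ^ 2 / δ ^ 2 = C ^ 2 * D := by
    rw [hD]; ring
  constructor
  · exact summable_of_sum_le (fun i => by positivity) key
  · rw [hBeq]
    exact Summable.tsum_le_of_sum_le (summable_of_sum_le (fun i => by positivity) key) key
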